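/- The point p_{-3} = (x_{-3}(σ), y_{-3}(σ)) with x_{-3}(σ) = -2⁴·3⁶·σ(σ-18)(σ-21)²(σ+3)² / [(σ-9)²(σ²-21σ+72)²(σ²-15σ+18)²] and y_{-3}(σ) as given lies on the elliptic curve Y_{-3}: y² + (σ²-18σ+1)xy = x³ + (-σ⁴ + 36σ³ - 329σ² + 90σ + 2)x² + 9σ(-σ+18)x over ℚ(σ). -/
import Mathlib


open WeierstrassCurve

/-- The quadratic twist by `-3` of the elliptic surface `Y₁₈`:
`y² + (σ²-18σ+1)xy = x³ + (-σ⁴ + 36σ³ - 329σ² + 90σ + 2)x² + 9σ(-σ+18)x` over `ℚ(σ)`. -/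
noncomputable def Wtw : WeierstrassCurve.Affine (RatFunc ℚ) where
  a₁ := RatFunc.X ^ 2 - 18 * RatFunc.X + 1
  a₂ := -RatFunc.X ^ 4 + 36 * RatFunc.X ^ 3 - 329 * RatFunc.X ^ 2 + 90 * RatFunc.X + 2
  a₃ := 0
  a₄ := 9 * RatFunc.X * (-RatFunc.X + 18)
  a₆ := 0

local notation "σ" => (RatFunc.X : RatFunc ℚ)

lemma ratfunc_poly_ne_zero (p : Polynomial ℚ) (hp : Polynomial.eval 0 p ≠ 0) :
    algebraMap (Polynomial ℚ) (RatFunc ℚ) p ≠ 0 := by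
  refine (map_ne_zero_iff _ (IsFractionRing.injective (Polynomial ℚ) (RatFunc ℚ))).mpr ?_
  intro h; exact hp (by simp [h])

set_option maxHeartbeats 4000000 in
/-- The point `p_{-3} = (x_{-3}(σ), y_{-3}(σ))` lies on the twisted curve `Y_{-3}`. -/
theorem p_neg3_on_twist :
    Wtw.Equation
      (-(2 ^ 4 * 3 ^ 6 * σ * (σ - 18) * (σ - 21) ^ 2 * (σ + 3) ^ 2) /
        ((σ - 9) ^ 2 * (σ ^ 2 - 21 * σ + 72) ^ 2 * (σ ^ 2 - 15 * σ + 18) ^ 2))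
      (-(2 ^ 2 * 3 ^ 4 * σ * (σ - 18) * (σ - 21) * (σ + 3)) /
          ((σ - 9) ^ 3 * (σ ^ 2 - 21 * σ + 72) ^ 3 * (σ ^ 2 - 15 * σ + 18) ^ 3) *
        (σ ^ 10 - 108 * σ ^ 9 + 4455 * σ ^ 8 - 87822 * σ ^ 7 + 771363 * σ ^ 6 -
          294840 * σ ^ 5 - 44001711 * σ ^ 4 + 281168010 * σ ^ 3 - 545848956 * σ ^ 2 +
          132322248 * σ + 128490624)) := by
  have h9 : (σ - 9 : RatFunc ℚ) ≠ 0 := by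
    have : (σ - 9 : RatFunc ℚ) = algebraMap (Polynomial ℚ) (RatFunc ℚ) (Polynomial.X - 9) := by
      simp [map_ofNat]
    rw [this]; exact ratfunc_poly_ne_zero _ (by norm_num)
  have h21 : (σ ^ 2 - 21 * σ + 72 : RatFunc ℚ) ≠ 0 := by
    have : (σ ^ 2 - 21 * σ + 72 : RatFunc ℚ) =
        algebraMap (Polynomial ℚ) (RatFunc ℚ) (Polynomial.X ^ 2 - 21 * Polynomial.X + 72) := by
      simp [map_ofNat]
    rw [this]; exact ratfunc_poly_ne_zero _ (by norm_num)
  have h15 : (σ ^ 2 - 15 * σ + 18 : RatFunc ℚ) ≠ 0 := by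
    have : (σ ^ 2 - 15 * σ + 18 : RatFunc ℚ) =
        algebraMap (Polynomial ℚ) (RatFunc ℚ) (Polynomial.X ^ 2 - 15 * Polynomial.X + 18) := by
      simp [map_ofNat]
    rw [this]; exact ratfunc_poly_ne_zero _ (by norm_num)
  rw [WeierstrassCurve.Affine.equation_iff]
  simp only [Wtw]
  rw [show ((σ - 9) ^ 2 * (σ ^ 2 - 21 * σ + 72) ^ 2 * (σ ^ 2 - 15 * σ + 18) ^ 2 : RatFunc ℚ) =
      ((σ - 9) * (σ ^ 2 - 21 * σ + 72) * (σ ^ 2 - 15 * σ + 18)) ^ 2 by ring,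
    show ((σ - 9) ^ 3 * (σ ^ 2 - 21 * σ + 72) ^ 3 * (σ ^ 2 - 15 * σ + 18) ^ 3 : RatFunc ℚ) =
      ((σ - 9) * (σ ^ 2 - 21 * σ + 72) * (σ ^ 2 - 15 * σ + 18)) ^ 3 by ring]
  set d : RatFunc ℚ := (σ - 9) * (σ ^ 2 - 21 * σ + 72) * (σ ^ 2 - 15 * σ + 18) with hdef
  have hd : d ≠ 0 := by rw [hdef]; exact mul_ne_zero (mul_ne_zero h9 h21) h15
  field_simp
  rw [hdef]
  ring
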